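/- Fix real matrices A ∈ ℝ^{n×n}, B₁ ∈ ℝ^{n×q}, B₂ ∈ ℝ^{n×m}, C₁ ∈ ℝ^{r×n}, C₂ ∈ ℝ^{p×n}, D₁₂ ∈ ℝ^{r×m}, D₂₁ ∈ ℝ^{p×q}. Let 𝒞₁ be a set of (2n+q)×(2n+q) real symmetric matrices and 𝒞₂ a set of (2n+r)×(2n+r) real symmetric matrices, each invariant under congruence: Tᵀ M T ∈ 𝒞ᵢ whenever M ∈ 𝒞ᵢ and T is invertible of the matching size. Let K = [0, C_K; B_K, A_K] ∈ ℝ^{(m+n)×(p+n)} be strictly proper (D_K = 0), γ ∈ ℝ, Γ an r×r symmetric matrix, and P a 2n×2n symmetric positive definite matrix with P₁₂ invertible. Set X = (P⁻¹)₁₁, Y = P₁₁, F = C_K(P⁻¹)₂₁, H = P₁₂B_K, M = Φ_M(K,P). Then: −[A_cl(K)ᵀP + P·A_cl(K), P·B_cl(K); B_cl(K)ᵀ·P, −γI_q] ∈ 𝒞₁ and [P, C_cl(K)ᵀ; C_cl(K), Γ] ∈ 𝒞₂ hold if and only if −𝒜(γ,F,H,M,X,Y) ∈ 𝒞₁ and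 ℬ(F,X,Y,Γ) ∈ 𝒞₂ hold. -/

import Mathlib

open Matrix

noncomputable section

/-- A 3×3 block matrix built from 9 blocks. -/
def blk3 {R : Type*} {i1 i2 i3 : Type*}
    (M11 : Matrix i1 i1 R) (M12 : Matrix i1 i2 R) (M13 : Matrix i1 i3 R)
    (M21 : Matrix i2 i1 R) (M22 : Matrix i2 i2 R) (M23 : Matrix i2 i3 R)
    (M31 : Matrix i3 i1 R) (M32 : Matrix i3 i2 R) (M33 : Matrix i3 i3 R) :
    Matrix ((i1 ⊕ i2) ⊕ i3) ((i1 ⊕ i2) ⊕ i3) R :=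
  Matrix.fromBlocks (Matrix.fromBlocks M11 M12 M21 M22)
    (Matrix.fromRows M13 M23) (Matrix.fromCols M31 M32) M33

/-- The mapping `Φ_M(K,P)` arising in output feedback ECL constructions. -/
def PhiM {n m p : ℕ} (A : Matrix (Fin n) (Fin n) ℝ) (B₂ : Matrix (Fin n) (Fin m) ℝ)
    (C₂ : Matrix (Fin p) (Fin n) ℝ)
    (K : Matrix (Fin m ⊕ Fin n) (Fin p ⊕ Fin n) ℝ)
    (P : Matrix (Fin n ⊕ Fin n) (Fin n ⊕ Fin n) ℝ) : Matrix (Fin n) (Fin n) ℝ :=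
  P.toBlocks₁₂ * K.toBlocks₂₁ * C₂ * (P⁻¹).toBlocks₁₁
    + P.toBlocks₁₁ * B₂ * K.toBlocks₁₂ * (P⁻¹).toBlocks₂₁
    + P.toBlocks₁₂ * K.toBlocks₂₂ * (P⁻¹).toBlocks₂₁
    + P.toBlocks₁₁ * (A + B₂ * K.toBlocks₁₁ * C₂) * (P⁻¹).toBlocks₁₁


lemma posDef_blocks₁₁ {l m : Type*} [Fintype l] [Fintype m] [DecidableEq l] [DecidableEq m]
    {P : Matrix (l ⊕ m) (l ⊕ m) ℝ} (hP : P.PosDef) : P.toBlocks₁₁.PosDef := by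
  refine Matrix.PosDef.of_dotProduct_mulVec_pos ?_ (fun x hx => ?_)
  · ext i j
    simpa [toBlocks₁₁] using (hP.1.apply (Sum.inl j) (Sum.inl i)).symm
  · have hx' : (Sum.elim x (0 : m → ℝ)) ≠ 0 := by
      intro h
      apply hx
      ext i
      exact congrFun h (Sum.inl i)
    have h2 := hP.dotProduct_mulVec_pos hx'
    convert h2 using 1
    simp [dotProduct, mulVec, Fintype.sum_sum_type, toBlocks₁₁]

lemma posDef_blocks₂₂ {l m : Type*} [Fintype l] [Fintype m] [DecidableEq l] [DecidableEq m]
    {P : Matrix (l ⊕ m) (l ⊕ m) ℝ} (hP : P.PosDef) : P.toBlocks₂₂.PosDef := by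
  refine Matrix.PosDef.of_dotProduct_mulVec_pos ?_ (fun x hx => ?_)
  · ext i j
    simpa [toBlocks₂₂] using (hP.1.apply (Sum.inr j) (Sum.inr i)).symm
  · have hx' : (Sum.elim (0 : l → ℝ) x) ≠ 0 := by
      intro h
      apply hx
      ext i
      exact congrFun h (Sum.inr i)
    have h2 := hP.dotProduct_mulVec_pos hx'
    convert h2 using 1
    simp [dotProduct, mulVec, Fintype.sum_sum_type, toBlocks₂₂]


lemma memc {ι : Type*} [Fintype ι] [DecidableEq ι] (𝒞 : Set (Matrix ι ι ℝ))
    (h : ∀ M ∈ 𝒞, ∀ T : Matrix ι ι ℝ, IsUnit T → Tᵀ * M * T ∈ 𝒞)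
    {T M M' : Matrix ι ι ℝ} (hT : IsUnit T) (hEq : Tᵀ * M * T = M') :
    M ∈ 𝒞 ↔ M' ∈ 𝒞 := by
  subst hEq
  have hdet : IsUnit T.det := (Matrix.isUnit_iff_isUnit_det T).mp hT
  constructor
  · exact fun hM => h M hM T hT
  · intro hM
    have hTinv : IsUnit T⁻¹ :=
      (Matrix.isUnit_iff_isUnit_det _).mpr (Matrix.isUnit_nonsing_inv_det_iff.mpr hdet)
    have h2 := h _ hM T⁻¹ hTinv
    have e : (T⁻¹)ᵀ * (Tᵀ * M * T) * T⁻¹ = M := by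
      rw [Matrix.transpose_nonsing_inv]
      calc Tᵀ⁻¹ * (Tᵀ * M * T) * T⁻¹ = (Tᵀ⁻¹ * (Tᵀ * (M * T))) * T⁻¹ := by
            rw [Matrix.mul_assoc Tᵀ]
        _ = (M * T) * T⁻¹ := by
            rw [Matrix.nonsing_inv_mul_cancel_left _ _ (by rwa [Matrix.det_transpose])]
        _ = M := Matrix.mul_nonsing_inv_cancel_right _ _ hdet
    rwa [e] at h2


lemma key1 {n m p q : ℕ}
    (A : Matrix (Fin n) (Fin n) ℝ) (B₁ : Matrix (Fin n) (Fin q) ℝ)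
    (B₂ : Matrix (Fin n) (Fin m) ℝ) (C₂ : Matrix (Fin p) (Fin n) ℝ)
    (D₂₁ : Matrix (Fin p) (Fin q) ℝ)
    (CK : Matrix (Fin m) (Fin n) ℝ) (BK : Matrix (Fin n) (Fin p) ℝ)
    (AK : Matrix (Fin n) (Fin n) ℝ) (γ : ℝ)
    (X Z W Y P12 P21 P22 Mm : Matrix (Fin n) (Fin n) ℝ)
    (f4 : X*Y + W*P21 = 1) (f6 : X*P12 + W*P22 = 0)
    (hXs : Xᵀ = X) (hZW : Zᵀ = W)
    (hYs : Yᵀ = Y) (h12 : P12ᵀ = P21) (h21 : P21ᵀ = P12) (h22 : P22ᵀ = P22)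
    (hM : Mm = P12*BK*C₂*X + Y*B₂*CK*Z + P12*AK*Z + Y*A*X) :
    (fromBlocks (fromBlocks X 1 Z 0) 0 0 (1 : Matrix (Fin q) (Fin q) ℝ))ᵀ *
      (Matrix.fromBlocks
        ((Matrix.fromBlocks A (B₂ * CK) (BK * C₂) AK)ᵀ * (fromBlocks Y P12 P21 P22) +
          (fromBlocks Y P12 P21 P22) * Matrix.fromBlocks A (B₂ * CK) (BK * C₂) AK)
        ((fromBlocks Y P12 P21 P22) * Matrix.fromRows B₁ (BK * D₂₁))
        ((Matrix.fromRows B₁ (BK * D₂₁))ᵀ * (fromBlocks Y P12 P21 P22))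
        (-(γ • (1 : Matrix (Fin q) (Fin q) ℝ)))) *
      (fromBlocks (fromBlocks X 1 Z 0) 0 0 1)
    = Matrix.fromBlocks
        (Matrix.fromBlocks
          (A * X + B₂ * (CK * Z) + (A * X + B₂ * (CK * Z))ᵀ)
          (Mmᵀ + A)
          ((Mmᵀ + A)ᵀ)
          (Y * A + (P12 * BK) * C₂ + (Y * A + (P12 * BK) * C₂)ᵀ))
        (Matrix.fromRows B₁ (Y * B₁ + (P12 * BK) * D₂₁))
        (Matrix.fromCols B₁ᵀ ((Y * B₁ + (P12 * BK) * D₂₁)ᵀ))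
        (-(γ • (1 : Matrix (Fin q) (Fin q) ℝ))) := by
  set T : Matrix (Fin n ⊕ Fin n) (Fin n ⊕ Fin n) ℝ := fromBlocks X 1 Z 0 with hT
  set Pb : Matrix (Fin n ⊕ Fin n) (Fin n ⊕ Fin n) ℝ := fromBlocks Y P12 P21 P22 with hPbdef
  set Ac : Matrix (Fin n ⊕ Fin n) (Fin n ⊕ Fin n) ℝ := fromBlocks A (B₂*CK) (BK*C₂) AK with hAc
  set R : Matrix (Fin n ⊕ Fin n) (Fin q) ℝ := fromRows B₁ (BK*D₂₁) with hR
  have hPb : Pbᵀ = Pb := by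
    rw [hPbdef, fromBlocks_transpose, hYs, h12, h21, h22]
  have hN : Tᵀ * (Pb * Ac) * T
      = fromBlocks (A*X + B₂*(CK*Z)) A Mm (Y*A + (P12*BK)*C₂) := by
    rw [hM, hT, hPbdef, hAc]
    simp only [fromBlocks_transpose, hXs, hZW, transpose_one, transpose_zero,
      fromBlocks_multiply]
    rw [fromBlocks_inj]
    refine ⟨?_, ?_, ?_, ?_⟩
    · trans ((X*Y + W*P21)*(A*X) + (X*P12 + W*P22)*((BK*C₂)*X)
        + (X*Y + W*P21)*((B₂*CK)*Z) + (X*P12 + W*P22)*(AK*Z))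
      · noncomm_ring
      · rw [f4, f6]; simp [Matrix.mul_assoc]
    · trans ((X*Y + W*P21)*A + (X*P12 + W*P22)*(BK*C₂))
      · noncomm_ring
      · rw [f4, f6]; simp [Matrix.mul_assoc]
    · simp only [Matrix.one_mul, Matrix.zero_mul, Matrix.mul_one, Matrix.mul_zero,
        Matrix.mul_add, Matrix.add_mul, Matrix.mul_assoc, add_zero, zero_add]
      abel
    · simp only [Matrix.one_mul, Matrix.zero_mul, Matrix.mul_one, Matrix.mul_zero,
        Matrix.mul_add, Matrix.add_mul, Matrix.mul_assoc, add_zero, zero_add]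
  have hRow : Tᵀ * (Pb * R) = fromRows B₁ (Y*B₁ + (P12*BK)*D₂₁) := by
    rw [hT, hPbdef, hR]
    simp only [fromBlocks_transpose, hXs, hZW, transpose_one, transpose_zero,
      fromBlocks_mul_fromRows]
    rw [fromRows_ext_iff]
    constructor
    · trans ((X*Y + W*P21)*B₁ + (X*P12 + W*P22)*(BK*D₂₁))
      · simp only [Matrix.mul_add, Matrix.add_mul, Matrix.mul_assoc]
        abel
      · rw [f4, f6]; simp
    · simp [Matrix.mul_assoc]
  have hCol : (Rᵀ * Pb) * T = fromCols B₁ᵀ ((Y*B₁ + (P12*BK)*D₂₁)ᵀ) := by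
    have h1 : (Rᵀ * Pb) * T = (Tᵀ * (Pb * R))ᵀ := by
      simp [Matrix.transpose_mul, hPb, Matrix.mul_assoc]
    rw [h1, hRow, transpose_fromRows]
  have hCorner : Tᵀ * (Acᵀ * Pb + Pb * Ac) * T
      = fromBlocks
          (A * X + B₂ * (CK * Z) + (A * X + B₂ * (CK * Z))ᵀ)
          (Mmᵀ + A)
          ((Mmᵀ + A)ᵀ)
          (Y * A + (P12 * BK) * C₂ + (Y * A + (P12 * BK) * C₂)ᵀ) := by
    have e : Tᵀ * (Acᵀ * Pb + Pb * Ac) * T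
        = (Tᵀ * (Pb * Ac) * T)ᵀ + Tᵀ * (Pb * Ac) * T := by
      have h2 : (Tᵀ * (Pb * Ac) * T)ᵀ = Tᵀ * (Acᵀ * Pb) * T := by
        simp [Matrix.transpose_mul, hPb, Matrix.mul_assoc]
      rw [h2, Matrix.mul_add, Matrix.add_mul]
    rw [e, hN, fromBlocks_transpose, fromBlocks_add]
    rw [fromBlocks_inj]
    refine ⟨by abel, rfl, ?_, by abel⟩
    rw [transpose_add, transpose_transpose]
    abel
  simp only [fromBlocks_transpose, transpose_zero, transpose_one, fromBlocks_multiply,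
    Matrix.mul_zero, Matrix.zero_mul, Matrix.mul_one, Matrix.one_mul, add_zero, zero_add]
  rw [fromBlocks_inj]
  refine ⟨?_, ?_, ?_, rfl⟩
  · rw [← hCorner]
  · rw [← hRow]
  · rw [← hCol]


lemma key2 {n m r : ℕ}
    (C₁ : Matrix (Fin r) (Fin n) ℝ) (D₁₂ : Matrix (Fin r) (Fin m) ℝ)
    (CK : Matrix (Fin m) (Fin n) ℝ) (Γ : Matrix (Fin r) (Fin r) ℝ)
    (X Z W Y P12 P21 P22 : Matrix (Fin n) (Fin n) ℝ)
    (f1 : Y*X + P12*Z = 1) (f4 : X*Y + W*P21 = 1) (f6 : X*P12 + W*P22 = 0)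
    (hXs : Xᵀ = X) (hZW : Zᵀ = W) :
    (fromBlocks (fromBlocks X 1 Z 0) 0 0 (1 : Matrix (Fin r) (Fin r) ℝ))ᵀ *
      (Matrix.fromBlocks (fromBlocks Y P12 P21 P22)
        (Matrix.fromCols C₁ (D₁₂ * CK))ᵀ
        (Matrix.fromCols C₁ (D₁₂ * CK)) Γ) *
      (fromBlocks (fromBlocks X 1 Z 0) 0 0 1)
    = Matrix.fromBlocks
        (fromBlocks X (1 : Matrix (Fin n) (Fin n) ℝ) (1 : Matrix (Fin n) (Fin n) ℝ) Y)
        (Matrix.fromRows ((C₁ * X + D₁₂ * (CK * Z))ᵀ) C₁ᵀ)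
        (Matrix.fromCols (C₁ * X + D₁₂ * (CK * Z)) C₁) Γ := by
  set T : Matrix (Fin n ⊕ Fin n) (Fin n ⊕ Fin n) ℝ := fromBlocks X 1 Z 0 with hT
  set Pb : Matrix (Fin n ⊕ Fin n) (Fin n ⊕ Fin n) ℝ := fromBlocks Y P12 P21 P22 with hPbdef
  set Cc : Matrix (Fin r) (Fin n ⊕ Fin n) ℝ := fromCols C₁ (D₁₂ * CK) with hCc
  have hCol : Cc * T = fromCols (C₁ * X + D₁₂ * (CK * Z)) C₁ := by
    rw [hCc, hT, fromCols_mul_fromBlocks]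
    rw [fromCols_ext_iff]
    constructor
    · simp [Matrix.mul_assoc]
    · simp
  have hRow : Tᵀ * Ccᵀ = fromRows ((C₁ * X + D₁₂ * (CK * Z))ᵀ) C₁ᵀ := by
    have : Tᵀ * Ccᵀ = (Cc * T)ᵀ := by rw [Matrix.transpose_mul]
    rw [this, hCol, transpose_fromCols]
  have hMid : Tᵀ * Pb * T = fromBlocks X 1 1 Y := by
    rw [hT, hPbdef]
    simp only [fromBlocks_transpose, hXs, hZW, transpose_one, transpose_zero,
      fromBlocks_multiply]
    rw [fromBlocks_inj]
    refine ⟨?_, ?_, ?_, ?_⟩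
    · trans ((X*Y + W*P21)*X + (X*P12 + W*P22)*Z)
      · noncomm_ring
      · rw [f4, f6]; simp
    · rw [f4, f6]; simp
    · simp only [Matrix.one_mul, Matrix.zero_mul, Matrix.mul_one, Matrix.mul_zero,
        Matrix.add_mul, add_zero, zero_add]
      exact f1
    · simp
  simp only [fromBlocks_transpose, transpose_zero, transpose_one, fromBlocks_multiply,
    Matrix.mul_zero, Matrix.zero_mul, Matrix.mul_one, Matrix.one_mul, add_zero, zero_add]
  rw [fromBlocks_inj]
  exact ⟨hMid, hRow, hCol, rfl⟩

/-- **Lemma D.5 (LQG congruence lemma)**: for congruence-invariant classes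
`𝒞₁, 𝒞₂` of symmetric matrices, a strictly proper policy `K = [0, C_K; B_K, A_K]`,
scalar `γ`, symmetric `Γ`, and `P ≻ 0` with `P₁₂` invertible, the pair of LMI
membership conditions in the policy variables `(K, P)` holds if and only if the
corresponding pair for the affine operators `𝒜, ℬ` in the transformed variables
`(F, H, M, X, Y) = (C_K(P⁻¹)₂₁, P₁₂B_K, Φ_M(K,P), (P⁻¹)₁₁, P₁₁)` holds. -/
theorem lqg_congruence_lemma {n m p q r : ℕ}
    (A : Matrix (Fin n) (Fin n) ℝ) (B₁ : Matrix (Fin n) (Fin q) ℝ)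
    (B₂ : Matrix (Fin n) (Fin m) ℝ) (C₁ : Matrix (Fin r) (Fin n) ℝ)
    (C₂ : Matrix (Fin p) (Fin n) ℝ) (D₁₂ : Matrix (Fin r) (Fin m) ℝ)
    (D₂₁ : Matrix (Fin p) (Fin q) ℝ)
    (𝒞₁ : Set (Matrix ((Fin n ⊕ Fin n) ⊕ Fin q) ((Fin n ⊕ Fin n) ⊕ Fin q) ℝ))
    (𝒞₂ : Set (Matrix ((Fin n ⊕ Fin n) ⊕ Fin r) ((Fin n ⊕ Fin n) ⊕ Fin r) ℝ))
    (h𝒞₁sym : ∀ M ∈ 𝒞₁, M.IsSymm) (h𝒞₂sym : ∀ M ∈ 𝒞₂, M.IsSymm)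
    (h𝒞₁ : ∀ M ∈ 𝒞₁, ∀ T : Matrix ((Fin n ⊕ Fin n) ⊕ Fin q) ((Fin n ⊕ Fin n) ⊕ Fin q) ℝ,
      IsUnit T → Tᵀ * M * T ∈ 𝒞₁)
    (h𝒞₂ : ∀ M ∈ 𝒞₂, ∀ T : Matrix ((Fin n ⊕ Fin n) ⊕ Fin r) ((Fin n ⊕ Fin n) ⊕ Fin r) ℝ,
      IsUnit T → Tᵀ * M * T ∈ 𝒞₂)
    (CK : Matrix (Fin m) (Fin n) ℝ) (BK : Matrix (Fin n) (Fin p) ℝ)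
    (AK : Matrix (Fin n) (Fin n) ℝ) (γ : ℝ)
    (Γ : Matrix (Fin r) (Fin r) ℝ) (hΓ : Γ.IsSymm)
    {P : Matrix (Fin n ⊕ Fin n) (Fin n ⊕ Fin n) ℝ}
    (hP : P.PosDef) (hP12 : IsUnit P.toBlocks₁₂) :
    (-(Matrix.fromBlocks
        ((Matrix.fromBlocks A (B₂ * CK) (BK * C₂) AK)ᵀ * P +
          P * Matrix.fromBlocks A (B₂ * CK) (BK * C₂) AK)
        (P * Matrix.fromRows B₁ (BK * D₂₁))
        ((Matrix.fromRows B₁ (BK * D₂₁))ᵀ * P)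
        (-(γ • (1 : Matrix (Fin q) (Fin q) ℝ)))) ∈ 𝒞₁ ∧
      Matrix.fromBlocks P (Matrix.fromCols C₁ (D₁₂ * CK))ᵀ
        (Matrix.fromCols C₁ (D₁₂ * CK)) Γ ∈ 𝒞₂) ↔
    (-(blk3
        (A * (P⁻¹).toBlocks₁₁ + B₂ * (CK * (P⁻¹).toBlocks₂₁) +
          (A * (P⁻¹).toBlocks₁₁ + B₂ * (CK * (P⁻¹).toBlocks₂₁))ᵀ)
        ((PhiM A B₂ C₂ (Matrix.fromBlocks 0 CK BK AK) P)ᵀ + A)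
        B₁
        (((PhiM A B₂ C₂ (Matrix.fromBlocks 0 CK BK AK) P)ᵀ + A)ᵀ)
        (P.toBlocks₁₁ * A + (P.toBlocks₁₂ * BK) * C₂ +
          (P.toBlocks₁₁ * A + (P.toBlocks₁₂ * BK) * C₂)ᵀ)
        (P.toBlocks₁₁ * B₁ + (P.toBlocks₁₂ * BK) * D₂₁)
        B₁ᵀ
        ((P.toBlocks₁₁ * B₁ + (P.toBlocks₁₂ * BK) * D₂₁)ᵀ)
        (-(γ • (1 : Matrix (Fin q) (Fin q) ℝ)))) ∈ 𝒞₁ ∧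
      blk3
        ((P⁻¹).toBlocks₁₁) (1 : Matrix (Fin n) (Fin n) ℝ)
        ((C₁ * (P⁻¹).toBlocks₁₁ + D₁₂ * (CK * (P⁻¹).toBlocks₂₁))ᵀ)
        (1 : Matrix (Fin n) (Fin n) ℝ) (P.toBlocks₁₁) C₁ᵀ
        (C₁ * (P⁻¹).toBlocks₁₁ + D₁₂ * (CK * (P⁻¹).toBlocks₂₁)) C₁ Γ ∈ 𝒞₂) := by
  have hPdet : IsUnit P.det := (Matrix.isUnit_iff_isUnit_det P).mp hP.isUnit
  have hPPinv : P * P⁻¹ = 1 := Matrix.mul_nonsing_inv P hPdet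
  have hPinvP : P⁻¹ * P = 1 := Matrix.nonsing_inv_mul P hPdet
  have hPsym : Pᵀ = P := by
    ext i j
    simpa using hP.1.apply i j
  have hPisym : (P⁻¹)ᵀ = P⁻¹ := by rw [Matrix.transpose_nonsing_inv, hPsym]
  have hmul1 : Matrix.fromBlocks
      (P.toBlocks₁₁ * (P⁻¹).toBlocks₁₁ + P.toBlocks₁₂ * (P⁻¹).toBlocks₂₁)
      (P.toBlocks₁₁ * (P⁻¹).toBlocks₁₂ + P.toBlocks₁₂ * (P⁻¹).toBlocks₂₂)
      (P.toBlocks₂₁ * (P⁻¹).toBlocks₁₁ + P.toBlocks₂₂ * (P⁻¹).toBlocks₂₁)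
      (P.toBlocks₂₁ * (P⁻¹).toBlocks₁₂ + P.toBlocks₂₂ * (P⁻¹).toBlocks₂₂)
      = Matrix.fromBlocks 1 0 0 1 := by
    rw [← fromBlocks_multiply, fromBlocks_toBlocks, fromBlocks_toBlocks, hPPinv, fromBlocks_one]
  obtain ⟨f1, f3, f2, f7⟩ := fromBlocks_inj.mp hmul1
  have hmul2 : Matrix.fromBlocks
      ((P⁻¹).toBlocks₁₁ * P.toBlocks₁₁ + (P⁻¹).toBlocks₁₂ * P.toBlocks₂₁)
      ((P⁻¹).toBlocks₁₁ * P.toBlocks₁₂ + (P⁻¹).toBlocks₁₂ * P.toBlocks₂₂)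
      ((P⁻¹).toBlocks₂₁ * P.toBlocks₁₁ + (P⁻¹).toBlocks₂₂ * P.toBlocks₂₁)
      ((P⁻¹).toBlocks₂₁ * P.toBlocks₁₂ + (P⁻¹).toBlocks₂₂ * P.toBlocks₂₂)
      = Matrix.fromBlocks 1 0 0 1 := by
    rw [← fromBlocks_multiply, fromBlocks_toBlocks, fromBlocks_toBlocks, hPinvP, fromBlocks_one]
  obtain ⟨f4, f6, f5, f8⟩ := fromBlocks_inj.mp hmul2
  have hYs : (P.toBlocks₁₁)ᵀ = P.toBlocks₁₁ := by
    ext i j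
    simpa [Matrix.toBlocks₁₁] using congrFun (congrFun hPsym (Sum.inl i)) (Sum.inl j)
  have h12 : (P.toBlocks₁₂)ᵀ = P.toBlocks₂₁ := by
    ext i j
    simpa [Matrix.toBlocks₁₂, Matrix.toBlocks₂₁] using
      congrFun (congrFun hPsym (Sum.inr i)) (Sum.inl j)
  have h21 : (P.toBlocks₂₁)ᵀ = P.toBlocks₁₂ := by
    ext i j
    simpa [Matrix.toBlocks₁₂, Matrix.toBlocks₂₁] using
      congrFun (congrFun hPsym (Sum.inl i)) (Sum.inr j)
  have h22 : (P.toBlocks₂₂)ᵀ = P.toBlocks₂₂ := by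
    ext i j
    simpa [Matrix.toBlocks₂₂] using congrFun (congrFun hPsym (Sum.inr i)) (Sum.inr j)
  have hXs : ((P⁻¹).toBlocks₁₁)ᵀ = (P⁻¹).toBlocks₁₁ := by
    ext i j
    simpa [Matrix.toBlocks₁₁] using congrFun (congrFun hPisym (Sum.inl i)) (Sum.inl j)
  have hZW : ((P⁻¹).toBlocks₂₁)ᵀ = (P⁻¹).toBlocks₁₂ := by
    ext i j
    simpa [Matrix.toBlocks₁₂, Matrix.toBlocks₂₁] using
      congrFun (congrFun hPisym (Sum.inl i)) (Sum.inr j)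
  have hYpd : (P.toBlocks₁₁).PosDef := posDef_blocks₁₁ hP
  have hVpd : ((P⁻¹).toBlocks₂₂).PosDef := posDef_blocks₂₂ hP.inv
  have hP21unit : IsUnit P.toBlocks₂₁ := by
    rw [← h12]
    exact (Matrix.isUnit_iff_isUnit_det _).mpr
      (by rw [Matrix.det_transpose]; exact (Matrix.isUnit_iff_isUnit_det _).mp hP12)
  have hZY : (P⁻¹).toBlocks₂₁ * P.toBlocks₁₁ = (-(P⁻¹).toBlocks₂₂) * P.toBlocks₂₁ := by
    rw [Matrix.neg_mul]
    exact eq_neg_of_add_eq_zero_left f5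
  have hZdet : IsUnit ((P⁻¹).toBlocks₂₁).det := by
    have h5 : IsUnit (((P⁻¹).toBlocks₂₁ * P.toBlocks₁₁).det) := by
      rw [hZY, Matrix.det_mul]
      exact ((Matrix.isUnit_iff_isUnit_det _).mp hVpd.isUnit.neg).mul
        ((Matrix.isUnit_iff_isUnit_det _).mp hP21unit)
    rw [Matrix.det_mul] at h5
    exact isUnit_of_mul_isUnit_left h5
  have hTU : (Matrix.fromBlocks (P⁻¹).toBlocks₁₁ 1 (P⁻¹).toBlocks₂₁ 0 :
        Matrix (Fin n ⊕ Fin n) (Fin n ⊕ Fin n) ℝ) *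
      (Matrix.fromBlocks 0 1 1 (-(P⁻¹).toBlocks₁₁)) =
      Matrix.fromBlocks 1 0 0 (P⁻¹).toBlocks₂₁ := by
    rw [fromBlocks_multiply, fromBlocks_inj]
    exact ⟨by simp, by simp, by simp, by simp⟩
  have hTdet : IsUnit ((Matrix.fromBlocks (P⁻¹).toBlocks₁₁ 1 (P⁻¹).toBlocks₂₁ 0 :
      Matrix (Fin n ⊕ Fin n) (Fin n ⊕ Fin n) ℝ)).det := by
    have h6 : IsUnit (((Matrix.fromBlocks (P⁻¹).toBlocks₁₁ 1 (P⁻¹).toBlocks₂₁ 0 :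
        Matrix (Fin n ⊕ Fin n) (Fin n ⊕ Fin n) ℝ) *
        (Matrix.fromBlocks 0 1 1 (-(P⁻¹).toBlocks₁₁))).det) := by
      rw [hTU, Matrix.det_fromBlocks_zero₂₁]
      simpa using hZdet
    rw [Matrix.det_mul] at h6
    exact isUnit_of_mul_isUnit_left h6
  have hT2q : IsUnit (Matrix.fromBlocks
      (Matrix.fromBlocks (P⁻¹).toBlocks₁₁ 1 (P⁻¹).toBlocks₂₁ 0 :
        Matrix (Fin n ⊕ Fin n) (Fin n ⊕ Fin n) ℝ) 0 0
      (1 : Matrix (Fin q) (Fin q) ℝ)) := by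
    rw [Matrix.isUnit_iff_isUnit_det, Matrix.det_fromBlocks_zero₂₁]
    simpa using hTdet
  have hT2r : IsUnit (Matrix.fromBlocks
      (Matrix.fromBlocks (P⁻¹).toBlocks₁₁ 1 (P⁻¹).toBlocks₂₁ 0 :
        Matrix (Fin n ⊕ Fin n) (Fin n ⊕ Fin n) ℝ) 0 0
      (1 : Matrix (Fin r) (Fin r) ℝ)) := by
    rw [Matrix.isUnit_iff_isUnit_det, Matrix.det_fromBlocks_zero₂₁]
    simpa using hTdet
  have hMeq : PhiM A B₂ C₂ (Matrix.fromBlocks 0 CK BK AK) P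
      = P.toBlocks₁₂ * BK * C₂ * (P⁻¹).toBlocks₁₁
        + P.toBlocks₁₁ * B₂ * CK * (P⁻¹).toBlocks₂₁
        + P.toBlocks₁₂ * AK * (P⁻¹).toBlocks₂₁
        + P.toBlocks₁₁ * A * (P⁻¹).toBlocks₁₁ := by
    simp [PhiM, Matrix.toBlocks_fromBlocks₁₁, Matrix.toBlocks_fromBlocks₁₂,
      Matrix.toBlocks_fromBlocks₂₁, Matrix.toBlocks_fromBlocks₂₂,
      Matrix.mul_zero, Matrix.zero_mul, add_zero]
  have E1 := key1 A B₁ B₂ C₂ D₂₁ CK BK AK γ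
    ((P⁻¹).toBlocks₁₁) ((P⁻¹).toBlocks₂₁) ((P⁻¹).toBlocks₁₂)
    (P.toBlocks₁₁) (P.toBlocks₁₂) (P.toBlocks₂₁) (P.toBlocks₂₂)
    (PhiM A B₂ C₂ (Matrix.fromBlocks 0 CK BK AK) P)
    f4 f6 hXs hZW hYs h12 h21 h22 hMeq
  rw [fromBlocks_toBlocks] at E1
  have E2 := key2 C₁ D₁₂ CK Γ
    ((P⁻¹).toBlocks₁₁) ((P⁻¹).toBlocks₂₁) ((P⁻¹).toBlocks₁₂)
    (P.toBlocks₁₁) (P.toBlocks₁₂) (P.toBlocks₂₁) (P.toBlocks₂₂)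
    f1 f4 f6 hXs hZW
  rw [fromBlocks_toBlocks] at E2
  refine and_congr ?_ ?_
  · refine memc 𝒞₁ h𝒞₁ hT2q ?_
    simp only [blk3]
    rw [mul_neg, neg_mul, E1]
  · refine memc 𝒞₂ h𝒞₂ hT2r ?_
    simp only [blk3]
    exact E2
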